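/- For all integers 0 ≤ l' ≤ l, the element {1}_q · {l'}_q! = (q−1)·∏_{a=1}^{l'}(q^a−1) divides {2l+1}_{q, l+1} = ∏_{a=l+1}^{2l+1}(q^a − 1) in ℤ[q,q^{-1}]. In particular, the quotient {2l+1}_{q,l+1}/({1}_q {l'}_q!) appearing in the ideal Z_{Br}^{(l_1,…,l_n)} is an element of ℤ[q,q^{-1}]. -/
import Mathlib


open LaurentPolynomial Finset

/-- `{i}_q = q^i - 1` in `ℤ[q,q⁻¹]`. -/
noncomputable def qInt (i : ℤ) : LaurentPolynomial ℤ := T i - 1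

/-- `{i}_{q,n} = {i}_q {i-1}_q ⋯ {i-n+1}_q`. -/
noncomputable def qShift (i : ℤ) (n : ℕ) : LaurentPolynomial ℤ :=
  ∏ r ∈ Finset.range n, qInt (i - r)

/-- `{n}_q! = {n}_{q,n}`. -/
noncomputable def qFact (n : ℕ) : LaurentPolynomial ℤ := qShift n n

lemma qShift_peel (n k : ℕ) :
    qShift ((n : ℤ) + 1) (k + 1) = qInt ((n : ℤ) + 1) * qShift n k := by
  unfold qShift
  rw [Finset.prod_range_succ', mul_comm]
  congr 1
  refine Finset.prod_congr rfl fun r _ => ?_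
  congr 1
  push_cast
  ring

lemma qShift_last (n : ℕ) (i : ℤ) (k : ℕ) : qShift i (k + 1) = qShift i k * qInt (i - k) :=
  Finset.prod_range_succ _ _

lemma qFact_succ (n : ℕ) : qFact (n + 1) = qInt (n + 1) * qFact n := by
  unfold qFact
  push_cast
  rw [qShift_peel]

lemma qInt_add (a b : ℤ) : qInt (a + b) = qInt a + T a * qInt b := by
  unfold qInt
  rw [T_add]
  ring

lemma qInt_zero : qInt 0 = 0 := by
  unfold qInt
  simp

/-- The key divisibility: `{k}_q!` divides `{n}_{q,k}` for `k ≤ n`. -/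
lemma qFact_dvd_qShift (n k : ℕ) (h : k ≤ n) : qFact k ∣ qShift n k := by
  induction n generalizing k with
  | zero =>
    interval_cases k
    simp [qFact, qShift]
  | succ n ih =>
    match k with
    | 0 => simp [qFact, qShift]
    | k + 1 =>
      push_cast
      rw [qShift_peel]
      have hsplit : qInt (↑(n + 1)) = qInt (↑(k + 1)) + T (↑(k + 1)) * qInt (↑(n - k)) := by
        have : ((n : ℤ) + 1) = ((k : ℤ) + 1) + ((n : ℤ) - k) := by ring
        push_cast [Nat.le_of_succ_le_succ h]
        rw [this, qInt_add]
      push_cast at hsplit ⊢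
      rw [hsplit, add_mul]
      apply dvd_add
      · rw [qFact_succ]
        push_cast
        exact mul_dvd_mul_left _ (ih k (Nat.le_of_succ_le_succ h))
      · rcases eq_or_lt_of_le (Nat.le_of_succ_le_succ h) with heq | hlt
        · subst heq
          simp [Nat.sub_self, qInt_zero]
        · have h1 : k + 1 ≤ n := hlt
          have := ih (k + 1) h1
          have hprod : qShift (n : ℤ) (k + 1) = qShift (n : ℤ) k * qInt ((n : ℤ) - k) :=
            qShift_last n (n : ℤ) k
          have hcast : ((n - k : ℕ) : ℤ) = (n : ℤ) - k := by
            push_cast [Nat.le_of_succ_le_succ h]; ring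
          calc qFact (k + 1) ∣ qShift (n : ℤ) (k + 1) := this
            _ ∣ T (↑k + 1) * qInt (↑(n - k)) * qShift (↑n) k :=
                ⟨T (↑k + 1), by rw [hprod, hcast]; ring⟩
          
lemma qInt_one_dvd (n : ℕ) : qInt 1 ∣ qInt n := by
  induction n with
  | zero => simp [qInt_zero]
  | succ n ih =>
    have : qInt (↑(n + 1)) = T 1 * qInt n + qInt 1 := by
      push_cast
      rw [show ((n : ℤ) + 1) = 1 + (n : ℤ) by ring, qInt_add]
      ring
    rw [this]
    exact dvd_add (Dvd.dvd.mul_left ih _) dvd_rfl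

lemma qFact_dvd_qFact {m n : ℕ} (h : m ≤ n) : qFact m ∣ qFact n := by
  induction n with
  | zero => simpa [Nat.le_zero.mp h]
  | succ n ih =>
    rcases Nat.lt_or_ge m (n + 1) with hlt | hge
    · exact (ih (Nat.lt_succ_iff.mp hlt)).trans ⟨qInt (n + 1), by rw [qFact_succ]; ring⟩
    · have : m = n + 1 := le_antisymm h hge
      subst this
      exact dvd_rfl

/-- For all `0 ≤ l' ≤ l`, the element `{1}_q · {l'}_q!` divides `{2l+1}_{q,l+1}`
in `ℤ[q,q⁻¹]`. -/
theorem qInt_one_mul_qFact_dvd (l l' : ℕ) (h : l' ≤ l) :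
    qInt 1 * qFact l' ∣ qShift (2 * l + 1) (l + 1) := by
  have h1 : qInt 1 * qFact l' ∣ qFact (l + 1) := by
    rw [qFact_succ]
    push_cast
    exact mul_dvd_mul (by exact_mod_cast qInt_one_dvd (l + 1)) (qFact_dvd_qFact h)
  have h2 : qFact (l + 1) ∣ qShift (2 * l + 1) (l + 1) := by
    have := qFact_dvd_qShift (2 * l + 1) (l + 1) (by omega)
    push_cast at this
    exact this
  exact h1.trans h2
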